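/- The sequence of differences of the Conolly-Fox sequence, d(n) = c(n) − c(n−1) (with c(0) = 0), coincides with the limit of the lists D_1 = {1}, D_k = concat[D_{k-1}, D_{k-1}, {0}]; that is, c(n) = d_1 + ... + d_n for all n ≥ 1. -/

import Mathlib

/-- `Dlist k` is the list `D_{k+1}`: `D_1 = [1]`, `D_{k+1} = D_k ++ D_k ++ [0]`. -/
def Dlist : ℕ → List ℕ
  | 0 => [1]
  | k+1 => Dlist k ++ Dlist k ++ [0]

/-- `dseq n` is the `n`-th term (1-indexed) of the limit of the lists `D_k`. -/
def dseq (n : ℕ) : ℕ := (Dlist n).getD (n - 1) 0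

namespace CF

def fseq (n : ℕ) : ℕ := ∑ i ∈ Finset.Icc 1 n, dseq i

lemma Dlist_length (k : ℕ) : (Dlist k).length = 2^(k+1) - 1 := by
  induction k with
  | zero => simp [Dlist]
  | succ k ih =>
    have h1 : 1 ≤ (2:ℕ)^(k+1) := Nat.one_le_two_pow
    have h2 : (2:ℕ)^(k+2) = 2 * 2^(k+1) := by ring
    simp [Dlist, ih]
    omega

lemma Dlist_prefix (k : ℕ) : Dlist k <+: Dlist (k+1) :=
  ⟨Dlist k ++ [0], by simp [Dlist]⟩

lemma Dlist_prefix_le {k m : ℕ} (h : k ≤ m) : Dlist k <+: Dlist m := by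
  induction m with
  | zero =>
    have : k = 0 := by omega
    subst this; exact List.prefix_rfl
  | succ m ih =>
    rcases Nat.lt_or_ge k (m+1) with h' | h'
    · exact (ih (by omega)).trans (Dlist_prefix m)
    · have : k = m + 1 := by omega
      subst this; exact List.prefix_rfl

lemma getD_stable {a b : ℕ} (h : a ≤ b) {i : ℕ} (hi : i < (Dlist a).length) :
    (Dlist b).getD i 0 = (Dlist a).getD i 0 := by
  have hp := Dlist_prefix_le h
  have hib : i < (Dlist b).length := lt_of_lt_of_le hi hp.length_le
  rw [List.getD_eq_getElem _ _ hi, List.getD_eq_getElem _ _ hib, hp.getElem hi]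

lemma dseq_eq (k n : ℕ) (h1 : 1 ≤ n) (h2 : n ≤ 2^(k+1) - 1) :
    dseq n = (Dlist k).getD (n-1) 0 := by
  have hk : n - 1 < (Dlist k).length := by
    rw [Dlist_length]
    have := Nat.one_le_two_pow (n := k+1)
    omega
  have hn : n - 1 < (Dlist n).length := by
    rw [Dlist_length]
    have := Nat.lt_two_pow_self (n := n)
    have : (2:ℕ)^n ≤ 2^(n+1) := Nat.pow_le_pow_right (by norm_num) (by omega)
    omega
  rcases le_total n k with h | h
  · exact (getD_stable h hn).symm
  · exact getD_stable h hk

lemma fseq_zero : fseq 0 = 0 := by simp [fseq]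

lemma fseq_succ (n : ℕ) : fseq (n+1) = fseq n + dseq (n+1) := by
  rw [fseq, Finset.sum_Icc_succ_top (by omega), ← fseq]

lemma fseq_take (k : ℕ) : ∀ n, n ≤ 2^(k+1) - 1 → fseq n = ((Dlist k).take n).sum := by
  intro n
  induction n with
  | zero => intro _; simp [fseq_zero]
  | succ n ih =>
    intro h
    have hn : n ≤ 2^(k+1) - 1 := by omega
    have hlt : n < (Dlist k).length := by rw [Dlist_length]; omega
    rw [fseq_succ, ih hn, List.sum_take_succ _ n hlt]
    congr 1
    rw [dseq_eq k (n+1) (by omega) h]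
    simp [List.getD_eq_getElem _ _ hlt, List.getElem?_eq_getElem hlt]

lemma Dlist_sum (k : ℕ) : (Dlist k).sum = 2^k := by
  induction k with
  | zero => simp [Dlist]
  | succ k ih => simp [Dlist, ih]; ring

lemma fseq_shift (k j : ℕ) (hj : j ≤ 2^(k+1) - 1) :
    fseq (2^(k+1) - 1 + j) = 2^k + fseq j := by
  have h1 : 1 ≤ (2:ℕ)^(k+1) := Nat.one_le_two_pow
  have h2 : (2:ℕ)^(k+2) = 2 * 2^(k+1) := by ring
  have hL : (Dlist k).length = 2^(k+1) - 1 := Dlist_length k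
  rw [fseq_take (k+1) _ (by omega), fseq_take k j hj]
  rw [show Dlist (k+1) = Dlist k ++ (Dlist k ++ [0]) from by simp [Dlist]]
  rw [List.take_append, List.take_of_length_le (by omega),
    List.take_append]
  rw [show 2^(k+1) - 1 + j - (Dlist k).length = j from by omega,
    show j - (Dlist k).length = 0 from by omega]
  simp [Dlist_sum]

/-- shifted version: for `1 ≤ k`, `fseq (2^k - 1 + j) = 2^(k-1) + fseq j`. -/
lemma fseq_shift' (k j : ℕ) (hk : 1 ≤ k) (hj : j ≤ 2^k - 1) :
    fseq (2^k - 1 + j) = 2^(k-1) + fseq j := by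
  have h : k - 1 + 1 = k := by omega
  have := fseq_shift (k-1) j (by rw [h]; exact hj)
  rwa [h] at this

lemma Dlist_mem_le {k : ℕ} : ∀ x ∈ Dlist k, x ≤ 1 := by
  induction k with
  | zero => simp [Dlist]
  | succ k ih => simp [Dlist]; intro x hx; rcases hx with h | h | h <;> simp_all

lemma dseq_le_one (n : ℕ) : dseq n ≤ 1 := by
  unfold dseq
  rcases Nat.lt_or_ge (n-1) (Dlist n).length with h | h
  · rw [List.getD_eq_getElem _ _ h]
    exact Dlist_mem_le _ (List.getElem_mem h)
  · rw [List.getD_eq_default _ _ h]; omega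

lemma fseq_le (n : ℕ) : fseq n ≤ n := by
  induction n with
  | zero => simp [fseq_zero]
  | succ n ih =>
    have := dseq_le_one (n+1)
    rw [fseq_succ]; omega

lemma fseq_one : fseq 1 = 1 := by decide
lemma fseq_two : fseq 2 = 2 := by decide
lemma fseq_three : fseq 3 = 2 := by decide

lemma fseq_pos : ∀ n, 1 ≤ n → 1 ≤ fseq n := by
  intro n
  induction n with
  | zero => omega
  | succ n ih =>
    intro _
    rcases Nat.eq_zero_or_pos n with h | h
    · subst h; rw [fseq_one]
    · have := ih h
      rw [fseq_succ]; omega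

lemma zmono : ∀ a b : ℕ, a ≤ b → a - fseq a ≤ b - fseq b := by
  intro a b h
  induction b with
  | zero => omega
  | succ b ih =>
    rcases Nat.lt_or_ge a (b+1) with h' | h'
    · have h1 := ih (by omega)
      have h2 := fseq_succ b
      have h3 := dseq_le_one (b+1)
      have h4 := fseq_le b
      omega
    · have : a = b + 1 := by omega
      subst this; exact le_rfl

lemma fseq_pow_sub_one (k : ℕ) (hk : 1 ≤ k) : fseq (2^k - 1) = 2^(k-1) := by
  simpa [fseq_zero] using fseq_shift' k 0 hk (by omega)

lemma fseq_pow_sub_two (k : ℕ) (hk : 1 ≤ k) : fseq (2^(k+1) - 2) = 2^k := by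
  have h1 : 1 ≤ (2:ℕ)^k := Nat.one_le_two_pow
  have e1 : (2:ℕ)^(k+1) = 2 * 2^k := by ring
  have e0 : (2:ℕ)^k = 2^(k-1) * 2 := by
    have h : k - 1 + 1 = k := by omega
    have := pow_succ 2 (k-1)
    rwa [h] at this
  rw [show 2^(k+1) - 2 = 2^k - 1 + (2^k - 1) from by omega,
    fseq_shift' k _ hk (le_refl _), fseq_pow_sub_one k hk]
  omega

/-- The key recurrence: `fseq` satisfies the Conolly–Fox recurrence. -/
lemma key : ∀ n, 2 ≤ n → fseq (n+1) = fseq (n+1 - fseq n) + fseq (n - fseq (n-1)) := by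
  intro n
  induction n using Nat.strong_induction_on with
  | _ n ih =>
  intro hn
  rcases eq_or_lt_of_le hn with h2 | h3
  · -- n = 2
    rw [← h2]
    norm_num [fseq_three, fseq_two, fseq_one]
  · -- n ≥ 3 : find k ≥ 1 with 2^(k+1)-1 ≤ n < 2^(k+2)-1
    obtain ⟨k, hk1, hkn, hkn2⟩ : ∃ k, 1 ≤ k ∧ 2^(k+1) - 1 ≤ n ∧ n < 2^(k+2) - 1 := by
      set t := Nat.log 2 (n+1) with ht
      have ha : 2^t ≤ n+1 := Nat.pow_log_le_self 2 (by omega)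
      have hb : n+1 < 2^(t+1) := Nat.lt_pow_succ_log_self (by norm_num) _
      have ht2 : 2 ≤ t := by
        by_contra hc
        push_neg at hc
        have : (2:ℕ)^(t+1) ≤ 2^2 := Nat.pow_le_pow_right (by norm_num) (by omega)
        omega
      have h1 : t - 1 + 1 = t := by omega
      have h2' : t - 1 + 2 = t + 1 := by omega
      exact ⟨t - 1, by omega, by rw [h1]; omega, by rw [h2']; omega⟩
    -- abbreviations and power facts
    have hpk1 : 1 ≤ (2:ℕ)^(k-1) := Nat.one_le_two_pow
    have e0 : (2:ℕ)^k = 2^(k-1) * 2 := by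
      have h : k - 1 + 1 = k := by omega
      have := pow_succ 2 (k-1)
      rwa [h] at this
    have e1 : (2:ℕ)^(k+1) = 2 * 2^k := by ring
    have e2 : (2:ℕ)^(k+2) = 2 * 2^(k+1) := by ring
    obtain ⟨j, hjle, rfl⟩ : ∃ j, j ≤ 2^(k+1) - 1 ∧ n = 2^(k+1) - 1 + j :=
      ⟨n - (2^(k+1) - 1), by omega, by omega⟩
    rcases Nat.eq_zero_or_pos j with hj0 | hj1
    · -- case j = 0 : n = 2^(k+1)-1
      subst hj0
      simp only [add_zero]
      have hfL : fseq (2^(k+1) - 1) = 2^k := by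
        have := fseq_pow_sub_one (k+1) (by omega); simpa using this
      have hfL1 : fseq (2^(k+1) - 1 - 1) = 2^k := by
        rw [show 2^(k+1) - 1 - 1 = 2^(k+1) - 2 from by omega]
        exact fseq_pow_sub_two k hk1
      have hfLp1 : fseq (2^(k+1) - 1 + 1) = 2^k + 1 := by
        rw [fseq_shift (k) 1 (by omega), fseq_one]
      rw [hfL, hfL1, hfLp1,
        show 2^(k+1) - 1 + 1 - 2^k = 2^k - 1 + 1 from by omega,
        show 2^(k+1) - 1 - 2^k = 2^k - 1 from by omega,
        fseq_shift' k 1 hk1 (by omega), fseq_pow_sub_one k hk1, fseq_one]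
      omega
    rcases eq_or_lt_of_le (show j ≤ 2^(k+1) - 1 from hjle) with hjL | hjlt
    · -- case j = 2^(k+1) - 1 : n = 2^(k+2) - 2
      subst hjL
      have hf2L : fseq (2^(k+1) - 1 + (2^(k+1) - 1)) = 2^(k+1) := by
        rw [fseq_shift k _ (le_refl _)]
        have := fseq_pow_sub_one (k+1) (by omega)
        simp only [Nat.add_sub_cancel] at this
        omega
      have hf2Lp1 : fseq (2^(k+1) - 1 + (2^(k+1) - 1) + 1) = 2^(k+1) := by
        rw [show 2^(k+1) - 1 + (2^(k+1) - 1) + 1 = 2^(k+2) - 1 from by omega]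
        have := fseq_pow_sub_one (k+2) (by omega)
        simpa using this
      have hf2Lm1 : fseq (2^(k+1) - 1 + (2^(k+1) - 1) - 1) = 2^(k+1) := by
        rw [show 2^(k+1) - 1 + (2^(k+1) - 1) - 1 = 2^(k+1) - 1 + (2^(k+1) - 2) from by omega,
          fseq_shift k _ (by omega), fseq_pow_sub_two k hk1]
        omega
      rw [hf2Lp1, hf2L, hf2Lm1,
        show 2^(k+1) - 1 + (2^(k+1) - 1) + 1 - 2^(k+1) = 2^(k+1) - 1 from by omega,
        show 2^(k+1) - 1 + (2^(k+1) - 1) - 2^(k+1) = 2^(k+1) - 2 from by omega,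
        fseq_pow_sub_two k hk1]
      have := fseq_pow_sub_one (k+1) (by omega)
      simp only [Nat.add_sub_cancel] at this
      rw [this]
      omega
    · -- case 1 ≤ j ≤ 2^(k+1) - 2
      have hfj_le : fseq j ≤ j := fseq_le j
      have hfj1_le : fseq (j-1) ≤ j - 1 := fseq_le _
      have hfn : fseq (2^(k+1) - 1 + j) = 2^k + fseq j := fseq_shift k j hjle
      have hfn1 : fseq (2^(k+1) - 1 + j - 1) = 2^k + fseq (j-1) := by
        rw [show 2^(k+1) - 1 + j - 1 = 2^(k+1) - 1 + (j-1) from by omega]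
        exact fseq_shift k (j-1) (by omega)
      have hfnp : fseq (2^(k+1) - 1 + j + 1) = 2^k + fseq (j+1) := by
        rw [show 2^(k+1) - 1 + j + 1 = 2^(k+1) - 1 + (j+1) from by omega]
        exact fseq_shift k (j+1) (by omega)
      -- bounds on the zero-counts
      have hfm2 : fseq (2^(k+1) - 2) = 2^k := fseq_pow_sub_two k hk1
      have hzb : j - fseq j ≤ 2^k - 2 := by
        have h := zmono j (2^(k+1) - 2) (by omega)
        omega
      have hzb' : j - 1 - fseq (j-1) ≤ 2^k - 2 := by
        have h := zmono (j-1) (2^(k+1) - 2) (by omega)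
        omega
      rw [hfnp, hfn, hfn1,
        show 2^(k+1) - 1 + j + 1 - (2^k + fseq j) = 2^k - 1 + (j - fseq j + 1) from by omega,
        show 2^(k+1) - 1 + j - (2^k + fseq (j-1)) = 2^k - 1 + (j - 1 - fseq (j-1) + 1) from by
          omega,
        fseq_shift' k _ hk1 (by omega), fseq_shift' k _ hk1 (by omega)]
      rcases eq_or_lt_of_le (show 1 ≤ j from hj1) with hj1' | hj2
      · -- j = 1
        rw [show j = 1 from by omega]
        norm_num [fseq_one, fseq_zero, fseq_two]
        omega
      · -- j ≥ 2 : use the induction hypothesis at j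
        have hred := ih j (by omega) (by omega)
        rw [show j - fseq j + 1 = j + 1 - fseq j from by omega,
          show j - 1 - fseq (j-1) + 1 = j - fseq (j-1) from by omega]
        omega

end CF

/-- The limit `{d_n}` of the lists `D_k` is the sequence of differences of the
Conolly–Fox sequence `c`: `c(n) = d_1 + ⋯ + d_n` for all `n ≥ 1` (equivalently
`d(n) = c(n) − c(n−1)` with `c(0) = 0`). -/
theorem conolly_fox_partial_sums (c : ℕ → ℕ) (h1 : c 1 = 1) (h2 : c 2 = 2)
    (hrec : ∀ n : ℕ, 2 ≤ n → c (n + 1) = c (n + 1 - c n) + c (n - c (n - 1))) :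
    ∀ n : ℕ, 1 ≤ n → c n = ∑ i ∈ Finset.Icc 1 n, dseq i := by
  have main : ∀ n, 1 ≤ n → c n = CF.fseq n := by
    intro n
    induction n using Nat.strong_induction_on with
    | _ n ih =>
    intro hn
    obtain ⟨m, rfl⟩ : ∃ m, n = m + 1 := ⟨n - 1, by omega⟩
    rcases Nat.lt_or_ge m 2 with h | h
    · interval_cases m
      · rw [h1, CF.fseq_one]
      · rw [h2, CF.fseq_two]
    · rw [hrec m h]
      have hm1 : c m = CF.fseq m := ih m (by omega) (by omega)
      have hm2 : c (m-1) = CF.fseq (m-1) := ih (m-1) (by omega) (by omega)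
      have hfm : CF.fseq m ≤ m := CF.fseq_le m
      have hfm1 : CF.fseq (m-1) ≤ m - 1 := CF.fseq_le _
      have hfp : 1 ≤ CF.fseq m := CF.fseq_pos m (by omega)
      have hfp1 : 1 ≤ CF.fseq (m-1) := CF.fseq_pos (m-1) (by omega)
      rw [hm1, hm2]
      have ha : c (m + 1 - CF.fseq m) = CF.fseq (m + 1 - CF.fseq m) :=
        ih _ (by omega) (by omega)
      have hb : c (m - CF.fseq (m-1)) = CF.fseq (m - CF.fseq (m-1)) :=
        ih _ (by omega) (by omega)
      rw [ha, hb, ← CF.key m h]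
  intro n hn
  rw [main n hn]
  rfl
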